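/- Combined with the Ranking-Matching Lemma, the matching uncovered set of every election is non-empty: for any election E = (V, C, σ) there exists a candidate a such that for every b ∈ C the separation graph G(a,b) admits a perfect matching. -/

import Mathlib

open Finset

/-- Greedy construction of a "stable" bijection between two finsets w.r.t. a key `κ`. -/
lemma greedy_matching {V : Type*} [DecidableEq V] (κ : V → V → ℕ) :
    ∀ (n : ℕ) (L R : Finset V), L.card = n → R.card = n →
      ∃ f : V → V, (∀ i ∈ L, f i ∈ R) ∧ (∀ i ∈ L, ∀ j ∈ L, f i = f j → i = j) ∧
        (∀ i ∈ L, ∀ j ∈ L, κ i (f j) < κ i (f i) → κ j (f j) ≤ κ i (f j)) := by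
  intro n
  induction n with
  | zero =>
    intro L R hL hR
    have hLe : L = ∅ := Finset.card_eq_zero.mp hL
    subst hLe
    exact ⟨id, by simp, by simp, by simp⟩
  | succ n ih =>
    intro L R hL hR
    have hLne : L.Nonempty := Finset.card_pos.mp (by omega)
    have hRne : R.Nonempty := Finset.card_pos.mp (by omega)
    obtain ⟨p, hp, hmin⟩ := Finset.exists_min_image (L ×ˢ R) (fun p => κ p.1 p.2)
      (hLne.product hRne)
    obtain ⟨i0, j0⟩ := p
    rw [Finset.mem_product] at hp
    obtain ⟨hpL, hpR⟩ := hp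
    obtain ⟨f, hf1, hf2, hf3⟩ := ih (L.erase i0) (R.erase j0)
      (by rw [Finset.card_erase_of_mem hpL, hL]; omega) (by rw [Finset.card_erase_of_mem hpR, hR]; omega)
    refine ⟨fun i => if i = i0 then j0 else f i, ?_, ?_, ?_⟩
    · intro i hi
      by_cases h : i = i0
      · simpa [h] using hpR
      · simp only [if_neg h]
        exact Finset.mem_of_mem_erase (hf1 i (Finset.mem_erase.mpr ⟨h, hi⟩))
    · intro i hi j hj hij
      by_cases h1 : i = i0 <;> by_cases h2 : j = i0
      · rw [h1, h2]
      · exfalso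
        simp only [if_pos h1, if_neg h2] at hij
        exact (Finset.mem_erase.mp (hf1 j (Finset.mem_erase.mpr ⟨h2, hj⟩))).1 hij.symm
      · exfalso
        simp only [if_neg h1, if_pos h2] at hij
        exact (Finset.mem_erase.mp (hf1 i (Finset.mem_erase.mpr ⟨h1, hi⟩))).1 hij
      · simp only [if_neg h1, if_neg h2] at hij
        exact hf2 i (Finset.mem_erase.mpr ⟨h1, hi⟩) j (Finset.mem_erase.mpr ⟨h2, hj⟩) hij
    · intro i hi j hj hblock
      by_cases h1 : i = i0
      · exfalso
        by_cases h2 : j = i0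
        · simp [h1, h2] at hblock
        · simp only [if_neg h2, if_pos h1] at hblock
          have hfj : f j ∈ R := Finset.mem_of_mem_erase (hf1 j (Finset.mem_erase.mpr ⟨h2, hj⟩))
          have hm := hmin (i0, f j) (Finset.mem_product.mpr ⟨hpL, hfj⟩)
          simp only at hm
          rw [h1] at hblock
          omega
      · by_cases h2 : j = i0
        · simp only [if_pos h2, if_neg h1] at hblock ⊢
          rw [h2]
          exact hmin (i, j0) (Finset.mem_product.mpr ⟨hi, hpR⟩)
        · simp only [if_neg h1, if_neg h2] at hblock ⊢
          exact hf3 i (Finset.mem_erase.mpr ⟨h1, hi⟩) j (Finset.mem_erase.mpr ⟨h2, hj⟩) hblock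

/-- The matching uncovered set of every election is non-empty. -/
theorem stmt13 {V C : Type*} [Fintype V] [Fintype C] [Nonempty V] [Nonempty C]
    (σ : V → C → C → Prop) (hσ : ∀ i, IsStrictTotalOrder C (σ i)) :
    ∃ a : C, ∀ b : C, ∃ M : V ≃ V, ∀ i : V,
      ∃ c : C, (a = c ∨ σ i a c) ∧ (c = b ∨ σ (M i) c b) := by
  classical
  -- rank of a candidate in a voter's order: number of candidates strictly below it
  set rank : V → C → ℕ := fun i c => (Finset.univ.filter (fun x => σ i c x)).card with hrank
  have hmono : ∀ i (c d : C), σ i c d → rank i d < rank i c := by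
    intro i c d h
    apply Finset.card_lt_card
    constructor
    · intro x hx
      simp only [Finset.mem_filter, Finset.mem_univ, true_and] at hx ⊢
      exact (hσ i).trans _ _ _ h hx
    · intro hsub
      have hd : d ∈ Finset.univ.filter (fun x => σ i c x) := by
        simp only [Finset.mem_filter, Finset.mem_univ, true_and]; exact h
      have hdd := hsub hd
      simp only [Finset.mem_filter, Finset.mem_univ, true_and] at hdd
      exact (hσ i).irrefl d hdd
  have hle : ∀ i (c d : C), rank i d ≤ rank i c → d = c ∨ σ i c d := by
    intro i c d hr
    rcases (show σ i d c ∨ d = c ∨ σ i c d by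
      by_cases h1 : σ i d c
      · exact Or.inl h1
      by_cases h2 : σ i c d
      · exact Or.inr (Or.inr h2)
      exact Or.inr (Or.inl ((hσ i).trichotomous d c h1 h2))) with h | h | h
    · exact absurd (hmono i d c h) (by omega)
    · exact Or.inl h
    · exact Or.inr h
  -- each voter has a top candidate
  have htop : ∀ j : V, ∃ tj : C, ∀ c : C, c = tj ∨ σ j tj c := by
    intro j
    obtain ⟨tj, _, htj⟩ := Finset.exists_max_image Finset.univ (rank j)
      ⟨Classical.arbitrary C, Finset.mem_univ _⟩
    exact ⟨tj, fun c => hle j tj c (htj c (Finset.mem_univ c))⟩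
  choose t ht using htop
  set κ : V → V → ℕ := fun i j => rank i (t j) with hκ
  obtain ⟨f, hf1, hf2, hf3⟩ := greedy_matching κ (Fintype.card V) Finset.univ Finset.univ rfl rfl
  have hinj : Function.Injective f := fun i j h =>
    hf2 i (Finset.mem_univ i) j (Finset.mem_univ j) h
  have hbij : Function.Bijective f := Finite.injective_iff_bijective.mp hinj
  obtain ⟨i0, _, hi0⟩ := Finset.exists_max_image Finset.univ (fun i => κ i (f i))
    ⟨Classical.arbitrary V, Finset.mem_univ _⟩
  refine ⟨t (f i0), fun b => ⟨Equiv.ofBijective f hbij, fun i => ⟨t (f i), ?_, ?_⟩⟩⟩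
  · have key : κ i (f i) ≤ κ i (f i0) := by
      by_contra hcon
      push_neg at hcon
      have h1 := hf3 i (Finset.mem_univ i) i0 (Finset.mem_univ i0) hcon
      have h2 := hi0 i (Finset.mem_univ i)
      omega
    rcases hle i (t (f i0)) (t (f i)) key with h | h
    · exact Or.inl h.symm
    · exact Or.inr h
  · have hMi : (Equiv.ofBijective f hbij) i = f i := rfl
    rw [hMi]
    rcases ht (f i) b with h | h
    · exact Or.inl h.symm
    · exact Or.inr h
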